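/- Let n, s, t, m, r be natural numbers. Let X_S be an n×s real matrix such that the s×s matrix X_Sᵀ·X_S is invertible, and let X_T be an n×t real matrix. Let P_R be an m×n real matrix with P_R·P_Rᵀ = I_m and P_Rᵀ·P_R = I_n − X_S·(X_SᵀX_S)⁻¹·X_Sᵀ. Let U be an m×r real matrix with Uᵀ·U = I_r, and let Q be an r×t real matrix with Qᵀ·Q = X_Tᵀ·P_Rᵀ·P_R·X_T. Define X̃_T = X_S·(X_SᵀX_S)⁻¹·X_Sᵀ·X_T + P_Rᵀ·U·Q. Then X̃_Tᵀ·X_S = X_Tᵀ·X_S. -/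

import Mathlib

open Matrix

theorem stmt_4 (n s t m r : ℕ)
    (XS : Matrix (Fin n) (Fin s) ℝ) (XT : Matrix (Fin n) (Fin t) ℝ)
    (hXS : IsUnit (XSᵀ * XS))
    (PR : Matrix (Fin m) (Fin n) ℝ)
    (hP1 : PR * PRᵀ = 1)
    (hP2 : PRᵀ * PR = 1 - XS * (XSᵀ * XS)⁻¹ * XSᵀ)
    (U : Matrix (Fin m) (Fin r) ℝ) (hU : Uᵀ * U = 1)
    (Q : Matrix (Fin r) (Fin t) ℝ) (hQ : Qᵀ * Q = XTᵀ * PRᵀ * PR * XT) :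
    (XS * (XSᵀ * XS)⁻¹ * XSᵀ * XT + PRᵀ * U * Q)ᵀ * XS = XTᵀ * XS := by
  have hinv : (XSᵀ * XS)⁻¹ * (XSᵀ * XS) = 1 := nonsing_inv_mul _ ((isUnit_iff_isUnit_det _).mp hXS)
  have hPXS : PR * XS = 0 := by
    have h : (PR * XS)ᴴ * (PR * XS) = 0 := by
      have : XSᵀ * (PRᵀ * PR) * XS = 0 := by
        rw [hP2]
        calc XSᵀ * (1 - XS * (XSᵀ * XS)⁻¹ * XSᵀ) * XS
            = XSᵀ * XS - XSᵀ * XS * ((XSᵀ * XS)⁻¹ * (XSᵀ * XS)) := by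
              rw [Matrix.mul_sub, Matrix.sub_mul, Matrix.mul_one]
              simp [Matrix.mul_assoc]
          _ = 0 := by rw [hinv, mul_one, sub_self]
      simpa [conjTranspose_eq_transpose_of_trivial, Matrix.mul_assoc] using this
    exact conjTranspose_mul_self_eq_zero.mp h
  have h1 : (XS * (XSᵀ * XS)⁻¹ * XSᵀ * XT)ᵀ * XS = XTᵀ * XS := by
    have hsym : ((XSᵀ * XS)⁻¹)ᵀ = (XSᵀ * XS)⁻¹ := by
      rw [Matrix.transpose_nonsing_inv, Matrix.transpose_mul, Matrix.transpose_transpose]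
    simp [Matrix.transpose_mul, Matrix.mul_assoc, hsym, ← Matrix.mul_assoc, hinv,
      Matrix.mul_assoc]
  have h2 : (PRᵀ * U * Q)ᵀ * XS = 0 := by
    simp [Matrix.transpose_mul, Matrix.mul_assoc, hPXS]
  rw [Matrix.transpose_add, Matrix.add_mul, h1, h2, add_zero]
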